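/- Let u, v ∈ K with ‖u‖ < 1 and ‖v‖ < 1, and let ε be a real number with ‖u − v‖ ≤ ε ≤ p^{−1/(p−1)}. Then the series ∑_{i≥1} u^i/i and ∑_{i≥1} v^i/i are summable in K and ‖∑_{i≥1} u^i/i − ∑_{i≥1} v^i/i‖ ≤ ε. (Equivalently, writing log(1−t) := −∑_{i≥1} t^i/i on the open unit ball, one has ‖log(1−u) − log(1−v)‖ ≤ ε.) -/

import Mathlib

open Finset

section Aux

variable (p : ℕ) [Fact p.Prime] {K : Type*} [NormedField K] [Algebra ℚ_[p] K]

private lemma aux_norm_natCast (hiso : ∀ x : ℚ_[p], ‖algebraMap ℚ_[p] K x‖ = ‖x‖) (n : ℕ) :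
    ‖(n : K)‖ = ‖(n : ℚ_[p])‖ := by
  rw [← map_natCast (algebraMap ℚ_[p] K) n, hiso]

private lemma aux_norm_nat_le_one (n : ℕ) : ‖(n : ℚ_[p])‖ ≤ 1 := by
  simpa using Padic.norm_int_le_one (p := p) (n : ℤ)

private lemma aux_rp_le_one : (p : ℝ) ^ (-1 / ((p : ℝ) - 1)) ≤ 1 := by
  have hp : (1 : ℝ) ≤ p := by exact_mod_cast (Fact.out : p.Prime).one_lt.le
  apply Real.rpow_le_one_of_one_le_of_nonpos hp
  rcases eq_or_lt_of_le hp with h | h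
  · simp [← h]
  · apply div_nonpos_of_nonpos_of_nonneg <;> linarith

private lemma aux_rp_pow : ((p : ℝ) ^ (-1 / ((p : ℝ) - 1))) ^ (p - 1) = (p : ℝ)⁻¹ := by
  have hp : (2 : ℝ) ≤ p := by exact_mod_cast (Fact.out : p.Prime).two_le
  have hp0 : (0 : ℝ) ≤ p := by linarith
  have hne : (p : ℝ) - 1 ≠ 0 := by linarith
  have hcast : ((p - 1 : ℕ) : ℝ) = (p : ℝ) - 1 := by
    have h1 : 1 ≤ p := (Fact.out : p.Prime).one_lt.le
    push_cast [h1]; ring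
  rw [← Real.rpow_natCast ((p : ℝ) ^ (-1 / ((p : ℝ) - 1))) (p - 1), ← Real.rpow_mul hp0, hcast,
    div_mul_cancel₀ (-1) hne, Real.rpow_neg_one]

/-- The key `p`-th power step. -/
private lemma aux_pow_p_step (hna : IsNonarchimedean (fun x : K => ‖x‖))
    (hiso : ∀ x : ℚ_[p], ‖algebraMap ℚ_[p] K x‖ = ‖x‖)
    (U V : K) (hU : ‖U‖ ≤ 1) (hV : ‖V‖ ≤ 1) (δ : ℝ)
    (hUV : ‖U - V‖ ≤ δ) (hδ : δ ≤ (p : ℝ) ^ (-1 / ((p : ℝ) - 1))) :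
    ‖U ^ p - V ^ p‖ ≤ δ * (p : ℝ)⁻¹ := by
  have : IsUltrametricDist K := IsUltrametricDist.isUltrametricDist_of_isNonarchimedean_norm hna
  have hδ0 : 0 ≤ δ := le_trans (norm_nonneg _) hUV
  have hδ1 : δ ≤ 1 := hδ.trans (aux_rp_le_one p)
  have hp2 : 2 ≤ p := (Fact.out : p.Prime).two_le
  have hp0 : (0 : ℝ) < p := by exact_mod_cast (Fact.out : p.Prime).pos
  have hw : U ^ p - V ^ p = ∑ k ∈ range p, V ^ k * (U - V) ^ (p - k) * (p.choose k : K) := by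
    have h := add_pow V (U - V) p
    rw [show V + (U - V) = U by ring] at h
    rw [h, Finset.sum_range_succ]
    simp
  rw [hw]
  have hpos : (0 : ℝ) ≤ δ * (p : ℝ)⁻¹ := by positivity
  apply IsUltrametricDist.norm_sum_le_of_forall_le_of_nonneg hpos
  intro k hk
  rw [Finset.mem_range] at hk
  rw [norm_mul, norm_mul, norm_pow, norm_pow]
  have hVk : ‖V‖ ^ k ≤ 1 := pow_le_one₀ (norm_nonneg _) hV
  have hwk : ‖U - V‖ ^ (p - k) ≤ δ ^ (p - k) :=
    pow_le_pow_left₀ (norm_nonneg _) hUV _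
  rcases eq_or_ne k 0 with rfl | hk0
  · -- term is V^0 * (U-V)^p * 1
    have hδp : δ ^ p ≤ δ * (p : ℝ)⁻¹ := by
      have h1 : δ ^ (p - 1) ≤ ((p : ℝ) ^ (-1 / ((p : ℝ) - 1))) ^ (p - 1) :=
        pow_le_pow_left₀ hδ0 hδ _
      rw [aux_rp_pow p] at h1
      calc δ ^ p = δ * δ ^ (p - 1) := by
            rw [← pow_succ']
            congr 1
            omega
        _ ≤ δ * (p : ℝ)⁻¹ := by
            apply mul_le_mul_of_nonneg_left h1 hδ0
    simp only [pow_zero, Nat.choose_zero_right, Nat.cast_one, norm_one, one_mul, mul_one,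
      Nat.sub_zero]
    exact le_trans (le_trans hwk hδp) le_rfl
  · -- 1 ≤ k ≤ p-1 : choose is divisible by p
    have hdvd : p ∣ p.choose k := Nat.Prime.dvd_choose_self (Fact.out : p.Prime) hk0 hk
    obtain ⟨m, hm⟩ := hdvd
    have hC : ‖((p.choose k : ℕ) : K)‖ ≤ (p : ℝ)⁻¹ := by
      rw [aux_norm_natCast p hiso, hm]
      push_cast
      rw [norm_mul, Padic.norm_p]
      calc (p : ℝ)⁻¹ * ‖(m : ℚ_[p])‖ ≤ (p : ℝ)⁻¹ * 1 := by
            apply mul_le_mul_of_nonneg_left (aux_norm_nat_le_one p m) (by positivity)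
        _ = (p : ℝ)⁻¹ := mul_one _
    have hwδ : ‖U - V‖ ^ (p - k) ≤ δ := by
      refine le_trans hwk (pow_le_of_le_one hδ0 hδ1 ?_)
      omega
    calc ‖V‖ ^ k * ‖U - V‖ ^ (p - k) * ‖((p.choose k : ℕ) : K)‖
        ≤ 1 * δ * (p : ℝ)⁻¹ := by
          apply mul_le_mul _ hC (norm_nonneg _) (by positivity)
          apply mul_le_mul hVk hwδ (by positivity) zero_le_one
      _ = δ * (p : ℝ)⁻¹ := by ring

private lemma aux_key [CompleteSpace K] (hna : IsNonarchimedean (fun x : K => ‖x‖))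
    (hiso : ∀ x : ℚ_[p], ‖algebraMap ℚ_[p] K x‖ = ‖x‖)
    (u v : K) (hu : ‖u‖ < 1) (hv : ‖v‖ < 1)
    (ε : ℝ) (huv : ‖u - v‖ ≤ ε) (hε : ε ≤ (p : ℝ) ^ (-1 / ((p : ℝ) - 1))) :
    ∀ i : ℕ, ‖u ^ i - v ^ i‖ ≤ ε * ‖(i : ℚ_[p])‖ := by
  have : IsUltrametricDist K := IsUltrametricDist.isUltrametricDist_of_isNonarchimedean_norm hna
  have hε0 : 0 ≤ ε := le_trans (norm_nonneg _) huv
  have hp2 : 2 ≤ p := (Fact.out : p.Prime).two_le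
  intro i
  induction i using Nat.strong_induction_on with
  | _ i ih =>
    rcases eq_or_ne i 0 with rfl | hi0
    · simp
    by_cases hdvd : p ∣ i
    · -- i = p * j
      obtain ⟨j, rfl⟩ := hdvd
      have hj0 : j ≠ 0 := by rintro rfl; simp at hi0
      have hjlt : j < p * j := by
        have := Nat.pos_of_ne_zero hj0
        nlinarith
      have hIH := ih j hjlt
      have hδle : ε * ‖(j : ℚ_[p])‖ ≤ (p : ℝ) ^ (-1 / ((p : ℝ) - 1)) := by
        calc ε * ‖(j : ℚ_[p])‖ ≤ ε * 1 :=
              mul_le_mul_of_nonneg_left (aux_norm_nat_le_one p j) hε0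
          _ = ε := mul_one _
          _ ≤ _ := hε
      have hstep := aux_pow_p_step p hna hiso (u ^ j) (v ^ j)
        (by rw [norm_pow]; exact pow_le_one₀ (norm_nonneg _) hu.le)
        (by rw [norm_pow]; exact pow_le_one₀ (norm_nonneg _) hv.le)
        (ε * ‖(j : ℚ_[p])‖) hIH hδle
      rw [← pow_mul, ← pow_mul, Nat.mul_comm j p] at hstep
      calc ‖u ^ (p * j) - v ^ (p * j)‖ ≤ ε * ‖(j : ℚ_[p])‖ * (p : ℝ)⁻¹ := hstep
        _ = ε * ‖((p * j : ℕ) : ℚ_[p])‖ := by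
            push_cast
            rw [norm_mul, Padic.norm_p]
            ring
    · -- p ∤ i : ‖i‖ = 1 and geometric factorization
      have hnorm1 : ‖(i : ℚ_[p])‖ = 1 := by
        rcases lt_or_eq_of_le (aux_norm_nat_le_one p i) with h | h
        · exfalso
          have := (Padic.norm_intCast_lt_one_iff (p := p) (k := (i : ℤ))).mp (by
            simpa using h)
          exact hdvd (by exact_mod_cast this)
        · exact h
      rw [hnorm1, mul_one]
      have hfac := geom_sum₂_mul u v i
      rw [← hfac, norm_mul]
      have hsum : ‖∑ k ∈ range i, u ^ k * v ^ (i - 1 - k)‖ ≤ 1 := by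
        apply IsUltrametricDist.norm_sum_le_of_forall_le_of_nonneg zero_le_one
        intro k _
        rw [norm_mul, norm_pow, norm_pow]
        calc ‖u‖ ^ k * ‖v‖ ^ (i - 1 - k) ≤ 1 * 1 := by
              apply mul_le_mul (pow_le_one₀ (norm_nonneg _) hu.le)
                (pow_le_one₀ (norm_nonneg _) hv.le) (by positivity) zero_le_one
          _ = 1 := one_mul _
      calc ‖∑ k ∈ range i, u ^ k * v ^ (i - 1 - k)‖ * ‖u - v‖ ≤ 1 * ε :=
            mul_le_mul hsum huv (norm_nonneg _) zero_le_one
        _ = ε := one_mul _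

private lemma aux_summable [CompleteSpace K] (hna : IsNonarchimedean (fun x : K => ‖x‖))
    (hiso : ∀ x : ℚ_[p], ‖algebraMap ℚ_[p] K x‖ = ‖x‖)
    (u : K) (hu : ‖u‖ < 1) : Summable (fun i : ℕ => u ^ i / (i : K)) := by
  have : IsUltrametricDist K := IsUltrametricDist.isUltrametricDist_of_isNonarchimedean_norm hna
  apply NonarchimedeanAddGroup.summable_of_tendsto_cofinite_zero
  rw [Nat.cofinite_eq_atTop]
  rw [tendsto_zero_iff_norm_tendsto_zero]
  have hbound : ∀ i : ℕ, ‖u ^ i / (i : K)‖ ≤ (i : ℝ) * ‖u‖ ^ i := by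
    intro i
    rcases eq_or_ne i 0 with rfl | hi0
    · simp
    have hnorm : ‖(i : K)‖ = ‖(i : ℚ_[p])‖ := aux_norm_natCast p hiso i
    have hlow : (1 : ℝ) ≤ (i : ℝ) * ‖(i : ℚ_[p])‖ := by
      -- write i = p ^ k * m with p ∤ m
      obtain ⟨k, m, hmnd, hfac⟩ :=
        Nat.exists_eq_pow_mul_and_not_dvd hi0 p (Fact.out : p.Prime).ne_one
      have hm1 : ‖((m : ℕ) : ℚ_[p])‖ = 1 := by
        rcases lt_or_eq_of_le (aux_norm_nat_le_one p m) with h | h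
        · exfalso
          have := (Padic.norm_intCast_lt_one_iff (p := p) (k := (m : ℤ))).mp (by
            simpa using h)
          exact hmnd (by exact_mod_cast this)
        · exact h
      have hnormi : ‖(i : ℚ_[p])‖ = ((p : ℝ) ^ k)⁻¹ := by
        rw [hfac]
        push_cast
        rw [norm_mul, norm_pow, Padic.norm_p, hm1, mul_one, inv_pow]
      rw [hnormi]
      have hple : ((p : ℝ) ^ k) ≤ (i : ℝ) := by
        have : p ^ k ≤ i := Nat.le_of_dvd (Nat.pos_of_ne_zero hi0) ⟨m, hfac⟩
        exact_mod_cast this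
      have hppos : (0 : ℝ) < (p : ℝ) ^ k := by
        have : (0 : ℝ) < p := by exact_mod_cast (Fact.out : p.Prime).pos
        positivity
      calc (1 : ℝ) = (p : ℝ) ^ k * ((p : ℝ) ^ k)⁻¹ := (mul_inv_cancel₀ hppos.ne').symm
        _ ≤ (i : ℝ) * ((p : ℝ) ^ k)⁻¹ := mul_le_mul_of_nonneg_right hple (by positivity)
    have hipos : (0 : ℝ) < ‖(i : ℚ_[p])‖ := by
      rw [norm_pos_iff]
      exact_mod_cast hi0
    rw [norm_div, norm_pow, hnorm, div_le_iff₀ hipos]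
    calc ‖u‖ ^ i = 1 * ‖u‖ ^ i := (one_mul _).symm
      _ ≤ ((i : ℝ) * ‖(i : ℚ_[p])‖) * ‖u‖ ^ i := by
          apply mul_le_mul_of_nonneg_right hlow (by positivity)
      _ = (i : ℝ) * ‖u‖ ^ i * ‖(i : ℚ_[p])‖ := by ring
  have htend : Filter.Tendsto (fun i : ℕ => (i : ℝ) * ‖u‖ ^ i) Filter.atTop (nhds 0) := by
    have hs : Summable (fun i : ℕ => (i : ℝ) ^ 1 * ‖u‖ ^ i) :=
      summable_pow_mul_geometric_of_norm_lt_one 1 (by simpa using hu)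
    simpa using hs.tendsto_atTop_zero
  exact squeeze_zero (fun i => norm_nonneg _) hbound htend

end Aux

/-- continuity-type bound for the p-adic logarithm series.
If `‖u‖ < 1`, `‖v‖ < 1` and `‖u - v‖ ≤ ε ≤ p^{-1/(p-1)}`, then the series
`∑_{i≥1} uⁱ/i` and `∑_{i≥1} vⁱ/i` are summable and their sums differ by at most `ε`.
(The `i = 0` term of `fun i : ℕ => uⁱ/(i : K)` vanishes since division by zero is zero.) -/
theorem log_series_close (p : ℕ) [Fact p.Prime]
    (K : Type*) [NormedField K] [CompleteSpace K]
    [Algebra ℚ_[p] K]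
    (hna : IsNonarchimedean (fun x : K => ‖x‖))
    (hiso : ∀ x : ℚ_[p], ‖algebraMap ℚ_[p] K x‖ = ‖x‖)
    (u v : K) (hu : ‖u‖ < 1) (hv : ‖v‖ < 1)
    (ε : ℝ) (huv : ‖u - v‖ ≤ ε) (hε : ε ≤ (p : ℝ) ^ (-1 / ((p : ℝ) - 1))) :
    Summable (fun i : ℕ => u ^ i / (i : K)) ∧
    Summable (fun i : ℕ => v ^ i / (i : K)) ∧
    ‖(∑' i : ℕ, u ^ i / (i : K)) - ∑' i : ℕ, v ^ i / (i : K)‖ ≤ ε := by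
  have : IsUltrametricDist K := IsUltrametricDist.isUltrametricDist_of_isNonarchimedean_norm hna
  have hε0 : 0 ≤ ε := le_trans (norm_nonneg _) huv
  have hsu := aux_summable p hna hiso u hu
  have hsv := aux_summable p hna hiso v hv
  refine ⟨hsu, hsv, ?_⟩
  rw [← Summable.tsum_sub hsu hsv]
  apply IsUltrametricDist.norm_tsum_le_of_forall_le_of_nonneg hε0
  intro i
  rcases eq_or_ne i 0 with rfl | hi0
  · simpa using hε0
  have hkey := aux_key p hna hiso u v hu hv ε huv hε i
  have hnorm : ‖(i : K)‖ = ‖(i : ℚ_[p])‖ := aux_norm_natCast p hiso i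
  have hipos : (0 : ℝ) < ‖(i : ℚ_[p])‖ := by
    rw [norm_pos_iff]
    exact_mod_cast hi0
  rw [div_sub_div_same, norm_div, hnorm, div_le_iff₀ hipos]
  exact hkey
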